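/- Let R be a commutative ring, n ≥ 2, G an abelian group, and φ : Um_n(R) → G a map satisfying MS1 (φ(vε) = φ(v) for every ε ∈ E_n(R) and v ∈ Um_n(R)) and MS4 (φ(f², a₂,…,aₙ)·φ(g, a₂,…,aₙ) = φ(f²g, a₂,…,aₙ) whenever all rows involved are unimodular). If φ satisfies MS5 (φ(r, a₂,…,aₙ)·φ(1+q, a₂,…,aₙ) = φ(q, a₂,…,aₙ) whenever r(1+q) ≡ q mod (a₂,…,aₙ) and all rows involved are unimodular), then φ satisfies MS3: φ(x, a₂,…,aₙ)·φ(y, a₂,…,aₙ) = φ(xy, a₂,…,aₙ) whenever x + y = 1 and all rows involved are unimodular. -/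
import Mathlib


/-- A row `v` of length `n` over a commutative ring is *unimodular* if there is a row `w`
with `∑ i, v i * w i = 1`. -/
def IsUnimodular {R : Type*} [CommRing R] {n : ℕ} (v : Fin n → R) : Prop :=
  ∃ w : Fin n → R, ∑ i, v i * w i = 1

/-- `ε` lies in the elementary group `E_n(R)`, i.e. the (sub)group of `GL_n(R)` generated by
the elementary matrices `e_{ij}(λ) = I + λ E_{ij}` (`i ≠ j`).  Since the generating set is
closed under inverses, this coincides with the multiplicative closure. -/
def IsElementary {R : Type*} [CommRing R] {n : ℕ} (ε : Matrix (Fin n) (Fin n) R) : Prop :=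
  ε ∈ Submonoid.closure {M : Matrix (Fin n) (Fin n) R |
    ∃ (i j : Fin n) (c : R), i ≠ j ∧ M = Matrix.transvection i j c}

/-- An `m × n` matrix is right invertible (i.e. lies in `Um_{m,n}(R)`) if it has a right
inverse. -/
def RightInvertible {R : Type*} [CommRing R] {m n : ℕ} (A : Matrix (Fin m) (Fin n) R) : Prop :=
  ∃ B : Matrix (Fin n) (Fin m) R, A * B = 1

/-- The stable range condition `sr_k(R)`. -/
def SRCond (R : Type*) [CommRing R] (k : ℕ) : Prop :=
  ∀ a : Fin (k + 1) → R, IsUnimodular a →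
    ∃ c : Fin k → R, IsUnimodular (fun i : Fin k => a i.castSucc + c i * a (Fin.last k))

section MennickeSymbolRelations

variable {R : Type*} [CommRing R] {G : Type*} [CommGroup G] {k : ℕ}

/-- `MS1`: invariance of `φ` under the right action of `E_n(R)` on unimodular rows. -/
def MS1 (φ : (Fin (k + 1) → R) → G) : Prop :=
  ∀ (v : Fin (k + 1) → R) (ε : Matrix (Fin (k + 1)) (Fin (k + 1)) R),
    IsUnimodular v → IsElementary ε → φ (Matrix.vecMul v ε) = φ v

/-- `MS3`: `φ(x,a)·φ(y,a) = φ(xy,a)` whenever `x + y = 1` and all rows involved are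
unimodular. -/
def MS3 (φ : (Fin (k + 1) → R) → G) : Prop :=
  ∀ (x y : R) (a : Fin k → R), x + y = 1 →
    IsUnimodular (Fin.cons x a) → IsUnimodular (Fin.cons y a) →
    IsUnimodular (Fin.cons (x * y) a) →
    φ (Fin.cons x a) * φ (Fin.cons y a) = φ (Fin.cons (x * y) a)

/-- `MS4`: `φ(f²,a)·φ(g,a) = φ(f²g,a)` whenever all rows involved are unimodular. -/
def MS4 (φ : (Fin (k + 1) → R) → G) : Prop :=
  ∀ (f g : R) (a : Fin k → R),
    IsUnimodular (Fin.cons (f ^ 2) a) → IsUnimodular (Fin.cons g a) →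
    IsUnimodular (Fin.cons (f ^ 2 * g) a) →
    φ (Fin.cons (f ^ 2) a) * φ (Fin.cons g a) = φ (Fin.cons (f ^ 2 * g) a)

/-- `MS5`: `φ(r,a)·φ(1+q,a) = φ(q,a)` whenever `r(1+q) ≡ q mod (a₂,…,aₙ)` and all rows
involved are unimodular. -/
def MS5 (φ : (Fin (k + 1) → R) → G) : Prop :=
  ∀ (r q : R) (a : Fin k → R),
    r * (1 + q) - q ∈ Ideal.span (Set.range a) →
    IsUnimodular (Fin.cons r a) → IsUnimodular (Fin.cons (1 + q) a) →
    IsUnimodular (Fin.cons q a) →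
    φ (Fin.cons r a) * φ (Fin.cons (1 + q) a) = φ (Fin.cons q a)

end MennickeSymbolRelations


section Aux

variable {R : Type*} [CommRing R] {G : Type*} [CommGroup G] {k : ℕ}

lemma unimod_cons_iff (x : R) (a : Fin k → R) :
    IsUnimodular (Fin.cons x a) ↔ ∃ s : R, x * s - 1 ∈ Ideal.span (Set.range a) := by
  constructor
  · rintro ⟨w, hw⟩
    rw [Fin.sum_univ_succ] at hw
    simp only [Fin.cons_zero, Fin.cons_succ] at hw
    refine ⟨w 0, ?_⟩
    have : x * w 0 - 1 = -(∑ i, a i * w i.succ) := by rw [← hw]; ring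
    rw [this]
    exact neg_mem (Ideal.sum_mem _ fun i _ =>
      Ideal.mul_mem_right _ _ (Ideal.subset_span ⟨i, rfl⟩))
  · rintro ⟨s, hs⟩
    obtain ⟨c, hc⟩ := (Submodule.mem_span_range_iff_exists_fun R).mp hs
    refine ⟨Fin.cons s (fun i => -c i), ?_⟩
    rw [Fin.sum_univ_succ]
    simp only [Fin.cons_zero, Fin.cons_succ]
    have : ∑ i, a i * -c i = -(x * s - 1) := by
      rw [← hc]; simp [mul_comm, Finset.sum_neg_distrib]
    rw [this]; ring

lemma unimod_congr {x x' : R} {a : Fin k → R}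
    (h : x - x' ∈ Ideal.span (Set.range a)) (hx : IsUnimodular (Fin.cons x a)) :
    IsUnimodular (Fin.cons x' a) := by
  obtain ⟨s, hs⟩ := (unimod_cons_iff x a).mp hx
  refine (unimod_cons_iff x' a).mpr ⟨s, ?_⟩
  have : x' * s - 1 = (x * s - 1) - (x - x') * s := by ring
  rw [this]
  exact sub_mem hs (Ideal.mul_mem_right _ _ h)

lemma vecMul_cons_transvection (x c : R) (a : Fin k → R) (m : Fin k) :
    Matrix.vecMul (Fin.cons x a) (Matrix.transvection m.succ 0 c)
      = Fin.cons (x + a m * c) a := by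
  funext j
  simp only [Matrix.transvection, Matrix.vecMul_add, Matrix.vecMul_one, Pi.add_apply]
  rw [Matrix.vecMul]
  simp only [Matrix.single, Matrix.of_apply, dotProduct]
  rcases Fin.eq_zero_or_eq_succ j with rfl | ⟨i, rfl⟩
  · have : ∀ l : Fin (k+1), (Fin.cons x a : Fin (k+1) → R) l *
        (if m.succ = l ∧ (0:Fin (k+1)) = 0 then c else 0)
        = if l = m.succ then a m * c else 0 := by
      intro l
      rcases eq_or_ne l m.succ with rfl | h
      · simp
      · simp [h, h.symm]
    rw [Finset.sum_congr rfl fun l _ => this l, Finset.sum_ite_eq' Finset.univ m.succ]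
    simp
  · have : ∀ l : Fin (k+1), (Fin.cons x a : Fin (k+1) → R) l *
        (if m.succ = l ∧ (0:Fin (k+1)) = i.succ then c else 0) = 0 := by
      intro l
      simp [(Fin.succ_ne_zero i).symm]
    rw [Finset.sum_congr rfl fun l _ => this l]
    simp

lemma phi_step {φ : (Fin (k + 1) → R) → G} (h1 : MS1 φ) (x c : R) (a : Fin k → R)
    (m : Fin k) (hx : IsUnimodular (Fin.cons x a)) :
    φ (Fin.cons (x + a m * c) a) = φ (Fin.cons x a) := by
  have helem : IsElementary (Matrix.transvection m.succ (0 : Fin (k+1)) c) :=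
    Submonoid.subset_closure ⟨m.succ, 0, c, Fin.succ_ne_zero m, rfl⟩
  have := h1 (Fin.cons x a) _ hx helem
  rwa [vecMul_cons_transvection] at this

lemma phi_congr {φ : (Fin (k + 1) → R) → G} (h1 : MS1 φ) {x x' : R} {a : Fin k → R}
    (h : x - x' ∈ Ideal.span (Set.range a)) (hx : IsUnimodular (Fin.cons x a)) :
    φ (Fin.cons x' a) = φ (Fin.cons x a) := by
  have h' : x' - x ∈ Ideal.span (Set.range a) := by
    have := neg_mem h; rwa [neg_sub] at this
  obtain ⟨c, hc⟩ := (Submodule.mem_span_range_iff_exists_fun R).mp h'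
  have key : ∀ s : Finset (Fin k),
      φ (Fin.cons (x + ∑ i ∈ s, c i * a i) a) = φ (Fin.cons x a) := by
    intro s
    induction s using Finset.induction_on with
    | empty => simp
    | @insert j s hj ih =>
      rw [Finset.sum_insert hj]
      have heq : x + (c j * a j + ∑ i ∈ s, c i * a i)
          = (x + ∑ i ∈ s, c i * a i) + a j * c j := by ring
      rw [heq]
      have hmem : x - (x + ∑ i ∈ s, c i * a i) ∈ Ideal.span (Set.range a) := by
        have : x - (x + ∑ i ∈ s, c i * a i) = -∑ i ∈ s, c i * a i := by ring
        rw [this]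
        exact neg_mem (Ideal.sum_mem _ fun i _ =>
          Ideal.mul_mem_left _ _ (Ideal.subset_span ⟨i, rfl⟩))
      rw [phi_step h1 _ _ _ _ (unimod_congr hmem hx), ih]
  have := key Finset.univ
  have hx' : x + ∑ i, c i * a i = x' := by
    have : ∑ i, c i • a i = x' - x := hc
    simp only [smul_eq_mul] at this
    rw [this]; ring
  rwa [hx'] at this

end Aux

/-- Under `MS1` and `MS4`, relation `MS5` implies relation `MS3`
(van der Kallen, Lemma 3.1, direction ⇐). -/
theorem ms5_implies_ms3 {R : Type*} [CommRing R] {G : Type*} [CommGroup G]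
    (k : ℕ) (hk : 1 ≤ k) (φ : (Fin (k + 1) → R) → G)
    (h1 : MS1 φ) (h4 : MS4 φ) (h5 : MS5 φ) : MS3 φ := by
  intro x y a hsum hux huy huxy
  obtain ⟨v, hv⟩ := (unimod_cons_iff y a).mp huy
  obtain ⟨u, hu⟩ := (unimod_cons_iff x a).mp hux
  set I := Ideal.span (Set.range a) with hI
  -- unimodularity of the auxiliary rows
  have u1 : IsUnimodular (Fin.cons (x * v) a) := by
    refine (unimod_cons_iff _ a).mpr ⟨u * y, ?_⟩
    have : x * v * (u * y) - 1 = y * v * (x * u - 1) + (y * v - 1) := by ring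
    rw [this]
    exact add_mem (Ideal.mul_mem_left _ _ hu) hv
  have u2 : IsUnimodular (Fin.cons (1 + x * v) a) := by
    refine (unimod_cons_iff _ a).mpr ⟨y, ?_⟩
    have : (1 + x * v) * y - 1 = x * (y * v - 1) + (x + y - 1) * (1 + v * y) - v * y * (x + y - 1) := by
      ring
    rw [this, hsum]
    simpa using Ideal.mul_mem_left _ x hv
  have u3 : IsUnimodular (Fin.cons (y ^ 2) a) := by
    refine (unimod_cons_iff _ a).mpr ⟨v ^ 2, ?_⟩
    have : y ^ 2 * v ^ 2 - 1 = (y * v + 1) * (y * v - 1) := by ring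
    rw [this]
    exact Ideal.mul_mem_left _ _ hv
  have m4 : y ^ 2 * (x * v) - x * y ∈ I := by
    have : y ^ 2 * (x * v) - x * y = x * y * (y * v - 1) := by ring
    rw [this]
    exact Ideal.mul_mem_left _ _ hv
  have m5 : y ^ 2 * (1 + x * v) - y ∈ I := by
    have : y ^ 2 * (1 + x * v) - y = x * y * (y * v - 1) + y * (x + y - 1) := by ring
    rw [this, hsum]
    simpa using Ideal.mul_mem_left _ (x * y) hv
  have m4' : x * y - y ^ 2 * (x * v) ∈ I := by
    have := neg_mem m4; rwa [neg_sub] at this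
  have m5' : y - y ^ 2 * (1 + x * v) ∈ I := by
    have := neg_mem m5; rwa [neg_sub] at this
  have u4 : IsUnimodular (Fin.cons (y ^ 2 * (1 + x * v)) a) := unimod_congr m5' huy
  have u5 : IsUnimodular (Fin.cons (y ^ 2 * (x * v)) a) := unimod_congr m4' huxy
  -- the MS5 relation
  have hA : x * (1 + x * v) - x * v ∈ I := by
    have : x * (1 + x * v) - x * v = -(x * (y * v - 1)) + x * v * (x + y - 1) := by ring
    rw [this, hsum]
    simpa using neg_mem (Ideal.mul_mem_left _ x hv)
  have E5 : φ (Fin.cons x a) * φ (Fin.cons (1 + x * v) a) = φ (Fin.cons (x * v) a) :=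
    h5 x (x * v) a hA hux u2 u1
  -- the MS4 relations
  have E4a : φ (Fin.cons (y ^ 2) a) * φ (Fin.cons (x * v) a)
      = φ (Fin.cons (y ^ 2 * (x * v)) a) := h4 y (x * v) a u3 u1 u5
  have E4b : φ (Fin.cons (y ^ 2) a) * φ (Fin.cons (1 + x * v) a)
      = φ (Fin.cons (y ^ 2 * (1 + x * v)) a) := h4 y (1 + x * v) a u3 u2 u4
  -- rewriting mod I
  have rwa4 : φ (Fin.cons (y ^ 2 * (x * v)) a) = φ (Fin.cons (x * y) a) :=
    phi_congr h1 m4' huxy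
  have rwa5 : φ (Fin.cons (y ^ 2 * (1 + x * v)) a) = φ (Fin.cons y a) :=
    phi_congr h1 m5' huy
  calc φ (Fin.cons x a) * φ (Fin.cons y a)
      = φ (Fin.cons x a) * (φ (Fin.cons (y ^ 2) a) * φ (Fin.cons (1 + x * v) a)) := by
        rw [E4b, rwa5]
    _ = φ (Fin.cons (y ^ 2) a) * (φ (Fin.cons x a) * φ (Fin.cons (1 + x * v) a)) :=
        mul_left_comm _ _ _
    _ = φ (Fin.cons (y ^ 2) a) * φ (Fin.cons (x * v) a) := by rw [E5]
    _ = φ (Fin.cons (x * y) a) := by rw [E4a, rwa4]
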